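/- Let x be a parallel-composition node with children x₁,…,x_c, let A_x be the auxiliary graph on vertices a₁,…,a_c where an edge a_i a_j indicates the existence of a valid cycle entering both G_{x_i} and G_{x_j} compatible with optimal sub-solutions, and let opt_i be the maximum size of an edge-disjoint packing inside G_{x_i}. If M* is a maximum matching of A_x, then the maximum size of an edge-disjoint packing of listed cycles (of length ≤ 4) inside G_x equals (Σ_{i=1}^{c} opt_i) + |M*|. -/

import Mathlib

open SimpleGraph

variable {V : Type*} [DecidableEq V]

/-- `E` is the edge set of a cycle of `Γ` of length at most `4`. -/
def IsShortCycleEdges (Γ : SimpleGraph V) (E : Finset (Sym2 V)) : Prop :=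
  ∃ (a : V) (w : Γ.Walk a a), w.IsCycle ∧ w.length ≤ 4 ∧ w.edges.toFinset = E

/-- `P` is an edge-disjoint packing of listed cycles from `ℒ` inside the subgraph `K`. -/
def IsPacking {Γ : SimpleGraph V} (ℒ : Finset (Finset (Sym2 V))) (K : Γ.Subgraph)
    (P : Finset (Finset (Sym2 V))) : Prop :=
  P ⊆ ℒ ∧ (∀ E ∈ P, (E : Set (Sym2 V)) ⊆ K.edgeSet) ∧
    ∀ E ∈ P, ∀ F ∈ P, E ≠ F → Disjoint E F

/-- A cycle (given by its edge set `E`) enters the subgraph `K`. -/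
def Enters {Γ : SimpleGraph V} (K : Γ.Subgraph) (E : Finset (Sym2 V)) : Prop :=
  (∃ e ∈ E, e ∈ K.edgeSet) ∧ (∃ e ∈ E, e ∉ K.edgeSet)

/-- `H` is a series composition of two parts, or a single edge `st`
(a leaf or a `•`-node of a layered decomposition tree). -/
def SeriesOrEdge {Γ : SimpleGraph V} (H : Γ.Subgraph) (s t : V) : Prop :=
  H.edgeSet = {s(s, t)} ∨
    ∃ (K₁ K₂ : Γ.Subgraph) (v : V), H = K₁ ⊔ K₂ ∧ K₁.verts ∩ K₂.verts = {v} ∧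
      s ∈ K₁.verts ∧ s ∉ K₂.verts ∧ t ∈ K₂.verts ∧ t ∉ K₁.verts ∧ v ≠ s ∧ v ≠ t


variable {s t : V}
variable {Γ : SimpleGraph V} {c : ℕ} {Hc : Fin c → Γ.Subgraph}

/-- `F` is the edge set of a path from `s` to `t` of length 1, 2 or 3. -/
def PathIn (s t : V) (F : Finset (Sym2 V)) : Prop :=
  F = {s(s,t)} ∨ (∃ u, u ≠ s ∧ u ≠ t ∧ F = {s(s,u), s(u,t)}) ∨
    (∃ u w, u ≠ w ∧ u ≠ s ∧ u ≠ t ∧ w ≠ s ∧ w ≠ t ∧ F = {s(s,u), s(u,w), s(w,t)})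

lemma pathIn_card {s t : V} (hst : s ≠ t) {F : Finset (Sym2 V)} (h : PathIn s t F) :
    (F.card = 1 ∧ F = {s(s,t)}) ∨ F.card = 2 ∨ F.card = 3 := by
  obtain h | ⟨u, hus, hut, h⟩ | ⟨u, w, huw, hus, hut, hws, hwt, h⟩ := h
  · exact Or.inl ⟨by simp [h], h⟩
  · refine Or.inr (Or.inl ?_)
    subst h
    rw [Finset.card_insert_of_notMem (by simp [Sym2.eq_iff]; tauto), Finset.card_singleton]
  · refine Or.inr (Or.inr ?_)
    subst h
    rw [Finset.card_insert_of_notMem (by simp [Sym2.eq_iff]; tauto),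
      Finset.card_insert_of_notMem (by simp [Sym2.eq_iff]; tauto), Finset.card_singleton]

lemma pathIn_nonempty {s t : V} {F : Finset (Sym2 V)} (h : PathIn s t F) : F.Nonempty := by
  obtain h | ⟨u, _, _, h⟩ | ⟨u, w, _, _, _, _, _, h⟩ := h <;> subst h <;> simp

lemma short_cycle_cases {Γ : SimpleGraph V} {E : Finset (Sym2 V)}
    (h : IsShortCycleEdges Γ E) :
    (∃ a b c : V, a ≠ b ∧ a ≠ c ∧ b ≠ c ∧ E = {s(a,b), s(b,c), s(c,a)}) ∨
    (∃ a b c d : V, a ≠ b ∧ a ≠ c ∧ a ≠ d ∧ b ≠ c ∧ b ≠ d ∧ c ≠ d ∧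
      E = {s(a,b), s(b,c), s(c,d), s(d,a)}) := by
  obtain ⟨a, w, hcyc, hlen, hE⟩ := h
  have h3 := hcyc.three_le_length
  interval_cases hl : w.length
  · left
    cases w with
    | nil => simp at hl
    | cons h p =>
      rename_i b
      cases p with
      | nil => simp at hl
      | cons h2 p2 =>
        rename_i c
        cases p2 with
        | nil => simp at hl
        | cons h3 p3 =>
          cases p3 with
          | nil =>
            have hn := hcyc.2
            simp [List.nodup_cons] at hn
            refine ⟨a, b, c, Ne.symm (by tauto), Ne.symm (by tauto), (by tauto), ?_⟩
            rw [← hE]; simp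
          | cons h4 p4 => simp at hl
  · right
    cases w with
    | nil => simp at hl
    | cons h p =>
      rename_i b
      cases p with
      | nil => simp at hl
      | cons h2 p2 =>
        rename_i c
        cases p2 with
        | nil => simp at hl
        | cons h3 p3 =>
          rename_i d
          cases p3 with
          | nil => simp at hl
          | cons h4 p4 =>
            cases p4 with
            | nil =>
              have hn := hcyc.2
              simp [List.nodup_cons] at hn
              refine ⟨a, b, c, d, Ne.symm (by tauto), Ne.symm (by tauto),
                Ne.symm (by tauto), (by tauto), (by tauto), (by tauto), ?_⟩
              rw [← hE]; simp
            | cons h5 p5 => simp at hl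

lemma short_cycle_nonempty {Γ : SimpleGraph V} {E : Finset (Sym2 V)}
    (h : IsShortCycleEdges Γ E) : E.Nonempty := by
  obtain ⟨a, b, c, _, _, _, h⟩ | ⟨a, b, c, d, _, _, _, _, _, _, h⟩ := short_cycle_cases h <;>
    subst h <;> simp

lemma short_cycle_card_le {Γ : SimpleGraph V} {E : Finset (Sym2 V)}
    (h : IsShortCycleEdges Γ E) : E.card ≤ 4 := by
  obtain ⟨a, w, hcyc, hlen, hE⟩ := h
  rw [← hE]
  calc w.edges.toFinset.card ≤ w.edges.length := w.edges.toFinset_card_le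
    _ = w.length := w.length_edges
    _ ≤ 4 := hlen

variable {s t : V}
variable {Γ : SimpleGraph V} {c : ℕ} {Hc : Fin c → Γ.Subgraph}

lemma pathIn1 {x y : V} (hx : x = s ∨ x = t) (hy : y = s ∨ y = t) (hxy : x ≠ y) :
    PathIn s t {s(x,y)} := by
  left
  rcases hx with rfl | rfl <;> rcases hy with rfl | rfl <;> try exact absurd rfl hxy
  · rfl
  · rw [Sym2.eq_swap]

lemma pathIn2 {x y u : V} (hx : x = s ∨ x = t) (hy : y = s ∨ y = t) (hxy : x ≠ y)
    (hus : u ≠ s) (hut : u ≠ t) : PathIn s t {s(x,u), s(u,y)} := by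
  refine Or.inr (Or.inl ⟨u, hus, hut, ?_⟩)
  rcases hx with rfl | rfl <;> rcases hy with rfl | rfl <;> try exact absurd rfl hxy
  · rfl
  · ext e; induction e using Sym2.ind; simp [Sym2.eq_iff]; tauto

lemma pathIn3 {x y u w : V} (hx : x = s ∨ x = t) (hy : y = s ∨ y = t) (hxy : x ≠ y)
    (hus : u ≠ s) (hut : u ≠ t) (hws : w ≠ s) (hwt : w ≠ t) (huw : u ≠ w) :
    PathIn s t {s(x,u), s(u,w), s(w,y)} := by
  rcases hx with rfl | rfl <;> rcases hy with rfl | rfl <;> try exact absurd rfl hxy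
  · exact Or.inr (Or.inr ⟨u, w, huw, hus, hut, hws, hwt, rfl⟩)
  · refine Or.inr (Or.inr ⟨w, u, huw.symm, hws, hwt, hus, hut, ?_⟩)
    ext e; induction e using Sym2.ind; simp [Sym2.eq_iff]; tauto

variable {Γ : SimpleGraph V} {c : ℕ} {Hc : Fin c → Γ.Subgraph}

lemma switch (hpar : ∀ i j, i ≠ j → (Hc i).verts ∩ (Hc j).verts = {s, t})
    {i j : Fin c} (hij : i ≠ j) {x y z : V}
    (h1 : s(x,y) ∈ (Hc i).edgeSet) (h2 : s(y,z) ∈ (Hc j).edgeSet) : y = s ∨ y = t := by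
  have hy1 : y ∈ (Hc i).verts := (Subgraph.mem_edgeSet.mp h1).snd_mem
  have hy2 : y ∈ (Hc j).verts := (Subgraph.mem_edgeSet.mp h2).fst_mem
  have h := hpar i j hij
  have : y ∈ ({s,t} : Set V) := h ▸ ⟨hy1, hy2⟩
  simpa using this

def SplitAt (s t : V) (Hc : Fin c → Γ.Subgraph) (i : Fin c) (E : Finset (Sym2 V)) : Prop :=
  ∃ j, j ≠ i ∧ ∃ F G : Finset (Sym2 V), E = F ∪ G ∧
    (F : Set (Sym2 V)) ⊆ (Hc i).edgeSet ∧ (G : Set (Sym2 V)) ⊆ (Hc j).edgeSet ∧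
    PathIn s t F ∧ PathIn s t G

section
variable (hpar : ∀ i j, i ≠ j → (Hc i).verts ∩ (Hc j).verts = {s, t})
include hpar

lemma tri_one {a b d : V} (hab : a ≠ b) (had : a ≠ d) (hbd : b ≠ d)
    {i j k : Fin c} (h1 : s(a,b) ∈ (Hc i).edgeSet) (h2 : s(b,d) ∈ (Hc j).edgeSet)
    (h3 : s(d,a) ∈ (Hc k).edgeSet) (hj : j ≠ i) (hk : k ≠ i) :
    SplitAt s t Hc i {s(a,b), s(b,d), s(d,a)} := by
  have hb : b = s ∨ b = t := switch hpar (Ne.symm hj) h1 h2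
  have ha : a = s ∨ a = t := switch hpar hk h3 h1
  have hjk : j = k := by
    by_contra hne
    have hd : d = s ∨ d = t := switch hpar hne h2 h3
    rcases ha with rfl|rfl <;> rcases hb with rfl|rfl <;> rcases hd with rfl|rfl <;> simp_all
  subst hjk
  have hds : d ≠ s := by rcases ha with rfl|rfl <;> rcases hb with rfl|rfl <;> tauto
  have hdt : d ≠ t := by rcases ha with rfl|rfl <;> rcases hb with rfl|rfl <;> tauto
  refine ⟨j, hj, {s(a,b)}, {s(b,d), s(d,a)}, by ext e; simp; try tauto, ?_, ?_,
    pathIn1 ha hb hab, pathIn2 hb ha (Ne.symm hab) hds hdt⟩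
  · intro e he; simp at he; subst he; exact h1
  · intro e he; simp at he; rcases he with rfl|rfl; exacts [h2, h3]

lemma tri_two {a b d : V} (hab : a ≠ b) (had : a ≠ d) (hbd : b ≠ d)
    {i j : Fin c} (h1 : s(a,b) ∈ (Hc i).edgeSet) (h2 : s(b,d) ∈ (Hc i).edgeSet)
    (h3 : s(d,a) ∈ (Hc j).edgeSet) (hj : j ≠ i) :
    SplitAt s t Hc i {s(a,b), s(b,d), s(d,a)} := by
  have ha : a = s ∨ a = t := switch hpar hj h3 h1
  have hd : d = s ∨ d = t := switch hpar (Ne.symm hj) h2 h3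
  have hbs : b ≠ s := by rcases ha with rfl|rfl <;> rcases hd with rfl|rfl <;> tauto
  have hbt : b ≠ t := by rcases ha with rfl|rfl <;> rcases hd with rfl|rfl <;> tauto
  refine ⟨j, hj, {s(a,b), s(b,d)}, {s(d,a)}, by ext e; simp; try tauto, ?_, ?_,
    pathIn2 ha hd had hbs hbt, pathIn1 hd ha (Ne.symm had)⟩
  · intro e he; simp at he; rcases he with rfl|rfl; exacts [h1, h2]
  · intro e he; simp at he; subst he; exact h3

lemma quad_one {a b x y : V} (hab : a ≠ b) (hax : a ≠ x) (hay : a ≠ y)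
    (hbx : b ≠ x) (hby : b ≠ y) (hxy : x ≠ y)
    {i j k l : Fin c} (h1 : s(a,b) ∈ (Hc i).edgeSet) (h2 : s(b,x) ∈ (Hc j).edgeSet)
    (h3 : s(x,y) ∈ (Hc k).edgeSet) (h4 : s(y,a) ∈ (Hc l).edgeSet)
    (hj : j ≠ i) (hk : k ≠ i) (hl : l ≠ i) :
    SplitAt s t Hc i {s(a,b), s(b,x), s(x,y), s(y,a)} := by
  have hb : b = s ∨ b = t := switch hpar (Ne.symm hj) h1 h2
  have ha : a = s ∨ a = t := switch hpar hl h4 h1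
  have hjk : j = k := by
    by_contra hne
    have hx : x = s ∨ x = t := switch hpar hne h2 h3
    rcases ha with rfl|rfl <;> rcases hb with rfl|rfl <;> rcases hx with rfl|rfl <;> simp_all
  have hkl : k = l := by
    by_contra hne
    have hy : y = s ∨ y = t := switch hpar hne h3 h4
    rcases ha with rfl|rfl <;> rcases hb with rfl|rfl <;> rcases hy with rfl|rfl <;> simp_all
  subst hjk; subst hkl
  have hxs : x ≠ s := by rcases ha with rfl|rfl <;> rcases hb with rfl|rfl <;> tauto
  have hxt : x ≠ t := by rcases ha with rfl|rfl <;> rcases hb with rfl|rfl <;> tauto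
  have hys : y ≠ s := by rcases ha with rfl|rfl <;> rcases hb with rfl|rfl <;> tauto
  have hyt : y ≠ t := by rcases ha with rfl|rfl <;> rcases hb with rfl|rfl <;> tauto
  refine ⟨j, hj, {s(a,b)}, {s(b,x), s(x,y), s(y,a)}, by ext e; simp; try tauto, ?_, ?_,
    pathIn1 ha hb hab, pathIn3 hb ha (Ne.symm hab) hxs hxt hys hyt hxy⟩
  · intro e he; simp at he; subst he; exact h1
  · intro e he; simp at he; rcases he with rfl|rfl|rfl; exacts [h2, h3, h4]

lemma quad_two {a b x y : V} (hab : a ≠ b) (hax : a ≠ x) (hay : a ≠ y)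
    (hbx : b ≠ x) (hby : b ≠ y) (hxy : x ≠ y)
    {i k l : Fin c} (h1 : s(a,b) ∈ (Hc i).edgeSet) (h2 : s(b,x) ∈ (Hc i).edgeSet)
    (h3 : s(x,y) ∈ (Hc k).edgeSet) (h4 : s(y,a) ∈ (Hc l).edgeSet)
    (hk : k ≠ i) (hl : l ≠ i) :
    SplitAt s t Hc i {s(a,b), s(b,x), s(x,y), s(y,a)} := by
  have hx : x = s ∨ x = t := switch hpar (Ne.symm hk) h2 h3
  have ha : a = s ∨ a = t := switch hpar hl h4 h1
  have hkl : k = l := by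
    by_contra hne
    have hy : y = s ∨ y = t := switch hpar hne h3 h4
    rcases ha with rfl|rfl <;> rcases hx with rfl|rfl <;> rcases hy with rfl|rfl <;> simp_all
  subst hkl
  have hbs : b ≠ s := by rcases ha with rfl|rfl <;> rcases hx with rfl|rfl <;> tauto
  have hbt : b ≠ t := by rcases ha with rfl|rfl <;> rcases hx with rfl|rfl <;> tauto
  have hys : y ≠ s := by rcases ha with rfl|rfl <;> rcases hx with rfl|rfl <;> tauto
  have hyt : y ≠ t := by rcases ha with rfl|rfl <;> rcases hx with rfl|rfl <;> tauto
  refine ⟨k, hk, {s(a,b), s(b,x)}, {s(x,y), s(y,a)}, by ext e; simp; try tauto, ?_, ?_,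
    pathIn2 ha hx hax hbs hbt, pathIn2 hx ha (Ne.symm hax) hys hyt⟩
  · intro e he; simp at he; rcases he with rfl|rfl; exacts [h1, h2]
  · intro e he; simp at he; rcases he with rfl|rfl; exacts [h3, h4]

lemma quad_three {a b x y : V} (hab : a ≠ b) (hax : a ≠ x) (hay : a ≠ y)
    (hbx : b ≠ x) (hby : b ≠ y) (hxy : x ≠ y)
    {i l : Fin c} (h1 : s(a,b) ∈ (Hc i).edgeSet) (h2 : s(b,x) ∈ (Hc i).edgeSet)
    (h3 : s(x,y) ∈ (Hc i).edgeSet) (h4 : s(y,a) ∈ (Hc l).edgeSet)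
    (hl : l ≠ i) :
    SplitAt s t Hc i {s(a,b), s(b,x), s(x,y), s(y,a)} := by
  have ha : a = s ∨ a = t := switch hpar hl h4 h1
  have hy : y = s ∨ y = t := switch hpar (Ne.symm hl) h3 h4
  have hbs : b ≠ s := by rcases ha with rfl|rfl <;> rcases hy with rfl|rfl <;> tauto
  have hbt : b ≠ t := by rcases ha with rfl|rfl <;> rcases hy with rfl|rfl <;> tauto
  have hxs : x ≠ s := by rcases ha with rfl|rfl <;> rcases hy with rfl|rfl <;> tauto
  have hxt : x ≠ t := by rcases ha with rfl|rfl <;> rcases hy with rfl|rfl <;> tauto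
  refine ⟨l, hl, {s(a,b), s(b,x), s(x,y)}, {s(y,a)}, by ext e; simp; try tauto, ?_, ?_,
    pathIn3 ha hy hay hbs hbt hxs hxt hbx, pathIn1 hy ha (Ne.symm hay)⟩
  · intro e he; simp at he; rcases he with rfl|rfl|rfl; exacts [h1, h2, h3]
  · intro e he; simp at he; subst he; exact h4

lemma quad_opp {a b x y : V} (hab : a ≠ b) (hax : a ≠ x) (hay : a ≠ y)
    (hbx : b ≠ x) (hby : b ≠ y) (hxy : x ≠ y)
    {i j l : Fin c} (h1 : s(a,b) ∈ (Hc i).edgeSet) (h2 : s(b,x) ∈ (Hc j).edgeSet)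
    (h3 : s(x,y) ∈ (Hc i).edgeSet) (h4 : s(y,a) ∈ (Hc l).edgeSet)
    (hj : j ≠ i) (hl : l ≠ i) : False := by
  have hb : b = s ∨ b = t := switch hpar (Ne.symm hj) h1 h2
  have hx : x = s ∨ x = t := switch hpar hj h2 h3
  have hy : y = s ∨ y = t := switch hpar (Ne.symm hl) h3 h4
  have ha : a = s ∨ a = t := switch hpar hl h4 h1
  rcases ha with rfl|rfl <;> rcases hb with rfl|rfl <;> rcases hx with rfl|rfl <;>
    rcases hy with rfl|rfl <;> simp_all

end

lemma rot3 (p q r : Sym2 V) : ({p,q,r} : Finset (Sym2 V)) = {q,r,p} := by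
  ext e; simp; tauto

lemma rot4 (p q r u : Sym2 V) : ({p,q,r,u} : Finset (Sym2 V)) = {q,r,u,p} := by
  ext e; simp; tauto

lemma split (hpar : ∀ i j, i ≠ j → (Hc i).verts ∩ (Hc j).verts = {s, t})
    {E : Finset (Sym2 V)} (hsc : IsShortCycleEdges Γ E)
    (hsub : (E : Set (Sym2 V)) ⊆ (⨆ i, Hc i).edgeSet)
    {i : Fin c} (hent : Enters (Hc i) E) : SplitAt s t Hc i E := by
  classical
  have hmem : ∀ e ∈ E, ∃ k, e ∈ (Hc k).edgeSet := by
    intro e he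
    have h := hsub he
    rw [Subgraph.edgeSet_iSup] at h
    simpa using h
  obtain ⟨a, b, d, hab, had, hbd, rfl⟩ | ⟨a, b, x, y, hab, hax, hay, hbx, hby, hxy, rfl⟩ :=
    short_cycle_cases hsc
  · by_cases c1 : s(a,b) ∈ (Hc i).edgeSet <;>
    by_cases c2 : s(b,d) ∈ (Hc i).edgeSet <;>
    by_cases c3 : s(d,a) ∈ (Hc i).edgeSet
    · obtain ⟨f, hfE, hfi⟩ := hent.2
      simp at hfE; rcases hfE with rfl|rfl|rfl <;> tauto
    · obtain ⟨j, hjm⟩ := hmem s(d,a) (by simp)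
      exact tri_two hpar hab had hbd c1 c2 hjm (fun h => c3 (h ▸ hjm))
    · obtain ⟨j, hjm⟩ := hmem s(b,d) (by simp)
      rw [rot3, rot3]
      exact tri_two hpar (Ne.symm had) (Ne.symm hbd) hab c3 c1 hjm (fun h => c2 (h ▸ hjm))
    · obtain ⟨j, hjm⟩ := hmem s(b,d) (by simp)
      obtain ⟨k, hkm⟩ := hmem s(d,a) (by simp)
      exact tri_one hpar hab had hbd c1 hjm hkm (fun h => c2 (h ▸ hjm)) (fun h => c3 (h ▸ hkm))
    · obtain ⟨j, hjm⟩ := hmem s(a,b) (by simp)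
      rw [rot3]
      exact tri_two hpar hbd (Ne.symm hab) (Ne.symm had) c2 c3 hjm (fun h => c1 (h ▸ hjm))
    · obtain ⟨j, hjm⟩ := hmem s(d,a) (by simp)
      obtain ⟨k, hkm⟩ := hmem s(a,b) (by simp)
      rw [rot3]
      exact tri_one hpar hbd (Ne.symm hab) (Ne.symm had) c2 hjm hkm
        (fun h => c3 (h ▸ hjm)) (fun h => c1 (h ▸ hkm))
    · obtain ⟨j, hjm⟩ := hmem s(a,b) (by simp)
      obtain ⟨k, hkm⟩ := hmem s(b,d) (by simp)
      rw [rot3, rot3]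
      exact tri_one hpar (Ne.symm had) (Ne.symm hbd) hab c3 hjm hkm
        (fun h => c1 (h ▸ hjm)) (fun h => c2 (h ▸ hkm))
    · obtain ⟨f, hfE, hfi⟩ := hent.1
      simp at hfE; rcases hfE with rfl|rfl|rfl <;> tauto
  · by_cases c1 : s(a,b) ∈ (Hc i).edgeSet <;>
    by_cases c2 : s(b,x) ∈ (Hc i).edgeSet <;>
    by_cases c3 : s(x,y) ∈ (Hc i).edgeSet <;>
    by_cases c4 : s(y,a) ∈ (Hc i).edgeSet
    · obtain ⟨f, hfE, hfi⟩ := hent.2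
      simp at hfE; rcases hfE with rfl|rfl|rfl|rfl <;> tauto
    · -- TTTF
      obtain ⟨l, hlm⟩ := hmem s(y,a) (by simp)
      exact quad_three hpar hab hax hay hbx hby hxy c1 c2 c3 hlm (fun h => c4 (h ▸ hlm))
    · -- TTFT : quad_three (y,a,b,x)
      obtain ⟨l, hlm⟩ := hmem s(x,y) (by simp)
      rw [rot4, rot4, rot4]
      exact quad_three hpar (Ne.symm hay) (Ne.symm hby) (Ne.symm hxy) hab hax hbx
        c4 c1 c2 hlm (fun h => c3 (h ▸ hlm))
    · -- TTFF : quad_two (a,b,x,y)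
      obtain ⟨k, hkm⟩ := hmem s(x,y) (by simp)
      obtain ⟨l, hlm⟩ := hmem s(y,a) (by simp)
      exact quad_two hpar hab hax hay hbx hby hxy c1 c2 hkm hlm
        (fun h => c3 (h ▸ hkm)) (fun h => c4 (h ▸ hlm))
    · -- TFTT : quad_three (x,y,a,b)
      obtain ⟨l, hlm⟩ := hmem s(b,x) (by simp)
      rw [rot4, rot4]
      exact quad_three hpar hxy (Ne.symm hax) (Ne.symm hbx) (Ne.symm hay) (Ne.symm hby) hab
        c3 c4 c1 hlm (fun h => c2 (h ▸ hlm))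
    · -- TFTF : quad_opp
      obtain ⟨j, hjm⟩ := hmem s(b,x) (by simp)
      obtain ⟨l, hlm⟩ := hmem s(y,a) (by simp)
      exact (quad_opp hpar hab hax hay hbx hby hxy c1 hjm c3 hlm
        (fun h => c2 (h ▸ hjm)) (fun h => c4 (h ▸ hlm))).elim
    · -- TFFT : quad_two (y,a,b,x)
      obtain ⟨k, hkm⟩ := hmem s(b,x) (by simp)
      obtain ⟨l, hlm⟩ := hmem s(x,y) (by simp)
      rw [rot4, rot4, rot4]
      exact quad_two hpar (Ne.symm hay) (Ne.symm hby) (Ne.symm hxy) hab hax hbx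
        c4 c1 hkm hlm (fun h => c2 (h ▸ hkm)) (fun h => c3 (h ▸ hlm))
    · -- TFFF : quad_one (a,b,x,y)
      obtain ⟨j, hjm⟩ := hmem s(b,x) (by simp)
      obtain ⟨k, hkm⟩ := hmem s(x,y) (by simp)
      obtain ⟨l, hlm⟩ := hmem s(y,a) (by simp)
      exact quad_one hpar hab hax hay hbx hby hxy c1 hjm hkm hlm
        (fun h => c2 (h ▸ hjm)) (fun h => c3 (h ▸ hkm)) (fun h => c4 (h ▸ hlm))
    · -- FTTT : quad_three (b,x,y,a)
      obtain ⟨l, hlm⟩ := hmem s(a,b) (by simp)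
      rw [rot4]
      exact quad_three hpar hbx hby (Ne.symm hab) hxy (Ne.symm hax) (Ne.symm hay)
        c2 c3 c4 hlm (fun h => c1 (h ▸ hlm))
    · -- FTTF : quad_two (b,x,y,a)
      obtain ⟨k, hkm⟩ := hmem s(y,a) (by simp)
      obtain ⟨l, hlm⟩ := hmem s(a,b) (by simp)
      rw [rot4]
      exact quad_two hpar hbx hby (Ne.symm hab) hxy (Ne.symm hax) (Ne.symm hay)
        c2 c3 hkm hlm (fun h => c4 (h ▸ hkm)) (fun h => c1 (h ▸ hlm))
    · -- FTFT : quad_opp (b,x,y,a)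
      obtain ⟨j, hjm⟩ := hmem s(x,y) (by simp)
      obtain ⟨l, hlm⟩ := hmem s(a,b) (by simp)
      exact (quad_opp hpar hbx hby (Ne.symm hab) hxy (Ne.symm hax) (Ne.symm hay)
        c2 hjm c4 hlm (fun h => c3 (h ▸ hjm)) (fun h => c1 (h ▸ hlm))).elim
    · -- FTFF : quad_one (b,x,y,a)
      obtain ⟨j, hjm⟩ := hmem s(x,y) (by simp)
      obtain ⟨k, hkm⟩ := hmem s(y,a) (by simp)
      obtain ⟨l, hlm⟩ := hmem s(a,b) (by simp)
      rw [rot4]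
      exact quad_one hpar hbx hby (Ne.symm hab) hxy (Ne.symm hax) (Ne.symm hay)
        c2 hjm hkm hlm (fun h => c3 (h ▸ hjm)) (fun h => c4 (h ▸ hkm)) (fun h => c1 (h ▸ hlm))
    · -- FFTT : quad_two (x,y,a,b)
      obtain ⟨k, hkm⟩ := hmem s(a,b) (by simp)
      obtain ⟨l, hlm⟩ := hmem s(b,x) (by simp)
      rw [rot4, rot4]
      exact quad_two hpar hxy (Ne.symm hax) (Ne.symm hbx) (Ne.symm hay) (Ne.symm hby) hab
        c3 c4 hkm hlm (fun h => c1 (h ▸ hkm)) (fun h => c2 (h ▸ hlm))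
    · -- FFTF : quad_one (x,y,a,b)
      obtain ⟨j, hjm⟩ := hmem s(y,a) (by simp)
      obtain ⟨k, hkm⟩ := hmem s(a,b) (by simp)
      obtain ⟨l, hlm⟩ := hmem s(b,x) (by simp)
      rw [rot4, rot4]
      exact quad_one hpar hxy (Ne.symm hax) (Ne.symm hbx) (Ne.symm hay) (Ne.symm hby) hab
        c3 hjm hkm hlm (fun h => c4 (h ▸ hjm)) (fun h => c1 (h ▸ hkm)) (fun h => c2 (h ▸ hlm))
    · -- FFFT : quad_one (y,a,b,x)
      obtain ⟨j, hjm⟩ := hmem s(a,b) (by simp)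
      obtain ⟨k, hkm⟩ := hmem s(b,x) (by simp)
      obtain ⟨l, hlm⟩ := hmem s(x,y) (by simp)
      rw [rot4, rot4, rot4]
      exact quad_one hpar (Ne.symm hay) (Ne.symm hby) (Ne.symm hxy) hab hax hbx
        c4 hjm hkm hlm (fun h => c1 (h ▸ hjm)) (fun h => c2 (h ▸ hkm)) (fun h => c3 (h ▸ hlm))
    · obtain ⟨f, hfE, hfi⟩ := hent.1
      simp at hfE; rcases hfE with rfl|rfl|rfl|rfl <;> tauto

lemma disj_of_parts {F G : Finset (Sym2 V)} {S T : Set (Sym2 V)}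
    (hF : (F : Set (Sym2 V)) ⊆ S) (hG : (G : Set (Sym2 V)) ⊆ T) (hST : S ∩ T = ∅) :
    Disjoint F G := by
  rw [Finset.disjoint_left]
  intro a haF haG
  have : a ∈ S ∩ T := ⟨hF haF, hG haG⟩
  simp [hST] at this

lemma series_sv_vt (hst : s ≠ t) {H K₁ K₂ : Γ.Subgraph} {v : V}
    (hH : H = K₁ ⊔ K₂) (hcut : K₁.verts ∩ K₂.verts = {v})
    (hs1 : s ∈ K₁.verts) (hs2 : s ∉ K₂.verts) (ht2 : t ∈ K₂.verts) (ht1 : t ∉ K₁.verts)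
    {F : Finset (Sym2 V)} (hF : (F : Set (Sym2 V)) ⊆ H.edgeSet) (hP : PathIn s t F) :
    (s(s,v) ∈ F ∧ s(v,t) ∈ F) ∨ (F.card = 3 ∧ (s(s,v) ∈ F ∨ s(v,t) ∈ F)) := by
  subst hH
  have hK1 : ∀ u : V, s(s,u) ∈ (K₁ ⊔ K₂).edgeSet → u ∈ K₁.verts := by
    intro u h
    rw [Subgraph.mem_edgeSet, Subgraph.sup_adj] at h
    rcases h with h | h
    · exact h.snd_mem
    · exact absurd h.fst_mem hs2
  have hK2 : ∀ u : V, s(u,t) ∈ (K₁ ⊔ K₂).edgeSet → u ∈ K₂.verts := by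
    intro u h
    rw [Subgraph.mem_edgeSet, Subgraph.sup_adj] at h
    rcases h with h | h
    · exact absurd h.snd_mem ht1
    · exact h.fst_mem
  have hvof : ∀ u : V, u ∈ K₁.verts → u ∈ K₂.verts → u = v := by
    intro u h1 h2
    have : u ∈ ({v} : Set V) := hcut ▸ ⟨h1, h2⟩
    simpa using this
  obtain h | ⟨u, hus, hut, h⟩ | ⟨u, w, huw, hus, hut, hws, hwt, h⟩ := hP
  · exfalso
    have hmem : s(s,t) ∈ (K₁ ⊔ K₂).edgeSet := hF (by simp [h])
    rw [Subgraph.mem_edgeSet, Subgraph.sup_adj] at hmem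
    rcases hmem with hm | hm
    · exact ht1 hm.snd_mem
    · exact hs2 hm.fst_mem
  · subst h
    have h1 : u ∈ K₁.verts := hK1 u (hF (by simp))
    have h2 : u ∈ K₂.verts := hK2 u (hF (by simp))
    have := hvof u h1 h2
    subst this
    exact Or.inl ⟨by simp, by simp⟩
  · subst h
    have hcard : ({s(s,u), s(u,w), s(w,t)} : Finset (Sym2 V)).card = 3 := by
      rw [Finset.card_insert_of_notMem (by simp [Sym2.eq_iff]; tauto),
        Finset.card_insert_of_notMem (by simp [Sym2.eq_iff]; tauto), Finset.card_singleton]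
    have h1 : u ∈ K₁.verts := hK1 u (hF (by simp))
    have h2 : w ∈ K₂.verts := hK2 w (hF (by simp))
    have huwmem : s(u,w) ∈ (K₁ ⊔ K₂).edgeSet := hF (by simp)
    rw [Subgraph.mem_edgeSet, Subgraph.sup_adj] at huwmem
    rcases huwmem with hm | hm
    · have := hvof w hm.snd_mem h2
      subst this
      exact Or.inr ⟨hcard, Or.inr (by simp)⟩
    · have := hvof u h1 hm.fst_mem
      subst this
      exact Or.inr ⟨hcard, Or.inl (by simp)⟩

lemma entering_clash (hst : s ≠ t) {i : Fin c} (hser : SeriesOrEdge (Hc i) s t)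
    {F₁ F₂ : Finset (Sym2 V)} (h1 : (F₁ : Set (Sym2 V)) ⊆ (Hc i).edgeSet)
    (h2 : (F₂ : Set (Sym2 V)) ⊆ (Hc i).edgeSet)
    (p1 : PathIn s t F₁) (p2 : PathIn s t F₂) (hd : Disjoint F₁ F₂) :
    F₁.card = 3 ∧ F₂.card = 3 := by
  have hdl := Finset.disjoint_left.mp hd
  rcases hser with hedge | ⟨K₁, K₂, v, hH, hcut, hs1, hs2, ht2, ht1, _, _⟩
  · exfalso
    obtain ⟨e, he⟩ := pathIn_nonempty p1
    have h1e : e ∈ (Hc i).edgeSet := h1 he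
    rw [hedge] at h1e
    simp at h1e
    subst h1e
    obtain ⟨f, hf⟩ := pathIn_nonempty p2
    have h2f : f ∈ (Hc i).edgeSet := h2 hf
    rw [hedge] at h2f
    simp at h2f
    subst h2f
    exact hdl he hf
  · have r1 := series_sv_vt hst hH hcut hs1 hs2 ht2 ht1 h1 p1
    have r2 := series_sv_vt hst hH hcut hs1 hs2 ht2 ht1 h2 p2
    rcases r1 with ⟨a1, b1⟩ | ⟨c1, h1'⟩ <;> rcases r2 with ⟨a2, b2⟩ | ⟨c2, h2'⟩
    · exact absurd a2 (hdl a1)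
    · rcases h2' with h | h
      · exact absurd h (hdl a1)
      · exact absurd h (hdl b1)
    · rcases h1' with h | h
      · exact absurd a2 (hdl h)
      · exact absurd b2 (hdl h)
    · exact ⟨c1, c2⟩

lemma no_two_entering (hst : s ≠ t)
    (hpar : ∀ i j, i ≠ j → (Hc i).verts ∩ (Hc j).verts = {s, t})
    (hedisj : ∀ i j, i ≠ j → (Hc i).edgeSet ∩ (Hc j).edgeSet = ∅)
    (hser : ∀ i, SeriesOrEdge (Hc i) s t)
    {E₁ E₂ : Finset (Sym2 V)} (h1 : IsShortCycleEdges Γ E₁) (h2 : IsShortCycleEdges Γ E₂)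
    (hsub1 : (E₁ : Set (Sym2 V)) ⊆ (⨆ i, Hc i).edgeSet)
    (hsub2 : (E₂ : Set (Sym2 V)) ⊆ (⨆ i, Hc i).edgeSet)
    {i : Fin c} (he1 : Enters (Hc i) E₁) (he2 : Enters (Hc i) E₂)
    (hd : Disjoint E₁ E₂) : False := by
  obtain ⟨j₁, hj₁, F₁, G₁, hE1, hFi₁, hGj₁, pF₁, pG₁⟩ := split hpar h1 hsub1 he1
  obtain ⟨j₂, hj₂, F₂, G₂, hE2, hFi₂, hGj₂, pF₂, pG₂⟩ := split hpar h2 hsub2 he2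
  have hF1sub : F₁ ⊆ E₁ := hE1 ▸ Finset.subset_union_left
  have hF2sub : F₂ ⊆ E₂ := hE2 ▸ Finset.subset_union_left
  have hdF : Disjoint F₁ F₂ := (hd.mono hF1sub hF2sub)
  obtain ⟨c1, c2⟩ := entering_clash hst (hser i) hFi₁ hFi₂ pF₁ pF₂ hdF
  have hstE : ∀ (E F G : Finset (Sym2 V)) (j : Fin c), j ≠ i → E = F ∪ G →
      (G : Set (Sym2 V)) ⊆ (Hc j).edgeSet → (F : Set (Sym2 V)) ⊆ (Hc i).edgeSet →
      PathIn s t G → IsShortCycleEdges Γ E → F.card = 3 → s(s,t) ∈ E := by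
    intro E F G j hj hE hGj hFi pG hsc hc
    have hdFG : Disjoint F G := disj_of_parts hFi hGj (hedisj i j (Ne.symm hj))
    have hcardE : E.card ≤ 4 := short_cycle_card_le hsc
    rw [hE, Finset.card_union_of_disjoint hdFG, hc] at hcardE
    obtain ⟨hG1, hGst⟩ | hG2 | hG3 := pathIn_card hst pG
    · rw [hE]
      exact Finset.mem_union_right _ (by simp [hGst])
    · omega
    · omega
  have hst1 : s(s,t) ∈ E₁ := hstE E₁ F₁ G₁ j₁ hj₁ hE1 hGj₁ hFi₁ pG₁ h1 c1
  have hst2 : s(s,t) ∈ E₂ := hstE E₂ F₂ G₂ j₂ hj₂ hE2 hGj₂ hFi₂ pG₂ h2 c2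
  exact absurd hst2 (Finset.disjoint_left.mp hd hst1)

lemma inside_or_enters {E : Finset (Sym2 V)} (hsc : IsShortCycleEdges Γ E)
    (hsub : (E : Set (Sym2 V)) ⊆ (⨆ i, Hc i).edgeSet) :
    (∃ i, (E : Set (Sym2 V)) ⊆ (Hc i).edgeSet) ∨ ∃ i, Enters (Hc i) E := by
  obtain ⟨e, he⟩ := short_cycle_nonempty hsc
  have hek : ∃ k, e ∈ (Hc k).edgeSet := by
    have h := hsub he
    rw [Subgraph.edgeSet_iSup] at h
    simpa using h
  obtain ⟨k, hk⟩ := hek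
  by_cases h : ∀ f ∈ E, f ∈ (Hc k).edgeSet
  · exact Or.inl ⟨k, fun f hf => h f hf⟩
  · push_neg at h
    obtain ⟨f, hfE, hfn⟩ := h
    exact Or.inr ⟨k, ⟨e, he, hk⟩, ⟨f, hfE, hfn⟩⟩

lemma unique_part (hedisj : ∀ i j, i ≠ j → (Hc i).edgeSet ∩ (Hc j).edgeSet = ∅)
    {e : Sym2 V} {k l : Fin c} (hk : e ∈ (Hc k).edgeSet) (hl : e ∈ (Hc l).edgeSet) :
    k = l := by
  by_contra h
  have := hedisj k l h
  have : e ∈ (Hc k).edgeSet ∩ (Hc l).edgeSet := ⟨hk, hl⟩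
  simp_all

lemma lower_bound [Fintype V] (hst : s ≠ t) (hc : 1 ≤ c)
    (hpar : ∀ i j, i ≠ j → (Hc i).verts ∩ (Hc j).verts = {s, t})
    (hedisj : ∀ i j, i ≠ j → (Hc i).edgeSet ∩ (Hc j).edgeSet = ∅)
    (ℒ : Finset (Finset (Sym2 V))) (hL : ∀ E ∈ ℒ, IsShortCycleEdges Γ E)
    (opt : Fin c → ℕ)
    (hopt : ∀ i, (∃ P, IsPacking ℒ (Hc i) P ∧ P.card = opt i) ∧
        ∀ P, IsPacking ℒ (Hc i) P → P.card ≤ opt i)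
    (A : SimpleGraph (Fin c))
    (hA : ∀ i j, A.Adj i j ↔ i ≠ j ∧ ∃ Cc ∈ ℒ,
        (Cc : Set (Sym2 V)) ⊆ (⨆ i, Hc i).edgeSet ∧ Enters (Hc i) Cc ∧ Enters (Hc j) Cc ∧
        (∃ P, IsPacking ℒ (Hc i) P ∧ P.card = opt i ∧ ∀ E ∈ P, Disjoint E Cc) ∧
        (∃ P, IsPacking ℒ (Hc j) P ∧ P.card = opt j ∧ ∀ E ∈ P, Disjoint E Cc))
    (M : A.Subgraph) (hM : M.IsMatching) :
    ∃ P, IsPacking ℒ (⨆ i, Hc i) P ∧ P.card = (∑ i, opt i) + M.edgeSet.ncard := by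
  classical
  have i0 : Fin c := ⟨0, hc⟩
  have hedge_sub : ∀ k, (Hc k).edgeSet ⊆ (⨆ i, Hc i).edgeSet := by
    intro k e he
    rw [Subgraph.edgeSet_iSup]
    exact Set.mem_iUnion.2 ⟨k, he⟩
  have hLnon : ∀ E ∈ ℒ, E.Nonempty := fun E hE => short_cycle_nonempty (hL E hE)
  choose Q0 hQ0p hQ0c using fun k => (hopt k).1
  -- matching uniqueness
  have key : ∀ x y y' : Fin c, M.Adj x y → M.Adj x y' → y = y' := by
    intro x y y' h h'
    obtain ⟨w, _, huniq⟩ := hM (M.edge_vert h)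
    rw [huniq y h, huniq y' h']
  have hMuniq : ∀ (k : Fin c) (e e' : Sym2 (Fin c)), e ∈ M.edgeSet → e' ∈ M.edgeSet →
      k ∈ e → k ∈ e' → e = e' := by
    intro k e e' he he' hk hk'
    induction e using Sym2.ind with
    | _ a b =>
    induction e' using Sym2.ind with
    | _ a' b' =>
    rw [Subgraph.mem_edgeSet] at he he'
    rw [Sym2.mem_iff] at hk hk'
    rcases hk with rfl | rfl <;> rcases hk' with rfl | rfl
    · rw [key k b b' he he']
    · rw [key k b a' he he'.symm, Sym2.eq_swap]
    · rw [key k a b' he.symm he', Sym2.eq_swap]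
    · rw [key k a a' he.symm he'.symm]
  -- data for each matching edge
  have hMedge : ∀ e : Sym2 (Fin c), ∃ (C : Finset (Sym2 V)) (Q₁ Q₂ : Finset (Finset (Sym2 V)))
      (i j : Fin c), e ∈ M.edgeSet → (e = s(i,j) ∧ i ≠ j ∧ C ∈ ℒ ∧
      (C : Set (Sym2 V)) ⊆ (⨆ k, Hc k).edgeSet ∧
      (C : Set (Sym2 V)) ⊆ (Hc i).edgeSet ∪ (Hc j).edgeSet ∧
      Enters (Hc i) C ∧ Enters (Hc j) C ∧
      IsPacking ℒ (Hc i) Q₁ ∧ Q₁.card = opt i ∧ (∀ F ∈ Q₁, Disjoint F C) ∧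
      IsPacking ℒ (Hc j) Q₂ ∧ Q₂.card = opt j ∧ (∀ F ∈ Q₂, Disjoint F C)) := by
    intro e
    by_cases he : e ∈ M.edgeSet
    · induction e using Sym2.ind with
      | _ a b =>
      have hAdj : A.Adj a b := M.adj_sub (Subgraph.mem_edgeSet.mp he)
      rw [hA] at hAdj
      obtain ⟨hne, C, hCL, hCsub, henta, hentb, ⟨Q₁, hp1, hc1, hd1⟩, ⟨Q₂, hp2, hc2, hd2⟩⟩ := hAdj
      obtain ⟨j', hj', F, G, hCFG, hFa, hGj, pF, pG⟩ := split hpar (hL C hCL) hCsub henta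
      have hj'b : j' = b := by
        obtain ⟨g, hgC, hgb⟩ := hentb.1
        rw [hCFG] at hgC
        rcases Finset.mem_union.mp hgC with hgF | hgG
        · exact absurd (unique_part hedisj (hFa hgF) hgb) hne
        · exact unique_part hedisj (hGj hgG) hgb
      rw [hj'b] at hGj
      refine ⟨C, Q₁, Q₂, a, b, fun _ => ⟨rfl, hne, hCL, hCsub, ?_, henta, hentb,
        hp1, hc1, fun F' hF' => (hd1 F' hF'), hp2, hc2, fun F' hF' => (hd2 F' hF')⟩⟩
      intro f hf
      rw [hCFG] at hf
      have hf' : f ∈ F ∪ G := hf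
      rcases Finset.mem_union.mp hf' with h | h
      · exact Or.inl (hFa h)
      · exact Or.inr (hGj h)
    · exact ⟨∅, ∅, ∅, i0, i0, fun h => absurd h he⟩
  choose fC fQ1 fQ2 fI fJ hFdat using hMedge
  -- per-part packings compatible with all incident matching cycles
  have hQex : ∀ k : Fin c, ∃ Qk, IsPacking ℒ (Hc k) Qk ∧ Qk.card = opt k ∧
      ∀ e ∈ M.edgeSet, k ∈ e → ∀ F ∈ Qk, Disjoint F (fC e) := by
    intro k
    by_cases hk : ∃ e ∈ M.edgeSet, k ∈ e
    · obtain ⟨e, heM, hke⟩ := hk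
      obtain ⟨heq, hne, _, _, _, _, _, hp1, hc1, hd1, hp2, hc2, hd2⟩ := hFdat e heM
      have hkij : k = fI e ∨ k = fJ e := by
        rw [heq, Sym2.mem_iff] at hke
        exact hke
      have huniq : ∀ e' ∈ M.edgeSet, k ∈ e' → e' = e := fun e' he' hke' =>
        hMuniq k e' e he' heM hke' hke
      rcases hkij with hkI | hkJ
      · subst hkI
        exact ⟨fQ1 e, hp1, hc1, fun e' he' hke' F hF => (huniq e' he' hke') ▸ hd1 F hF⟩
      · subst hkJ
        exact ⟨fQ2 e, hp2, hc2, fun e' he' hke' F hF => (huniq e' he' hke') ▸ hd2 F hF⟩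
    · push_neg at hk
      exact ⟨Q0 k, hQ0p k, hQ0c k, fun e he hke => absurd hke (hk e he)⟩
  choose Q hQp hQc hQd using hQex
  have hMfin : M.edgeSet.Finite := Set.toFinite _
  set Mfin : Finset (Sym2 (Fin c)) := hMfin.toFinset with hMfindef
  have hMmem : ∀ e, e ∈ Mfin ↔ e ∈ M.edgeSet := fun e => Set.Finite.mem_toFinset _
  -- the big packing
  refine ⟨(Finset.univ.biUnion Q) ∪ Mfin.image fC, ⟨?_, ?_, ?_⟩, ?_⟩
  · -- ⊆ ℒ
    intro E hE
    rcases Finset.mem_union.mp hE with h | h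
    · obtain ⟨k, _, hk⟩ := Finset.mem_biUnion.mp h
      exact (hQp k).1 hk
    · obtain ⟨e, he, rfl⟩ := Finset.mem_image.mp h
      exact (hFdat e ((hMmem e).mp he)).2.2.1
  · -- edges inside Gx
    intro E hE
    rcases Finset.mem_union.mp hE with h | h
    · obtain ⟨k, _, hk⟩ := Finset.mem_biUnion.mp h
      exact fun f hf => hedge_sub k ((hQp k).2.1 E hk hf)
    · obtain ⟨e, he, rfl⟩ := Finset.mem_image.mp h
      exact (hFdat e ((hMmem e).mp he)).2.2.2.1
  · -- pairwise disjoint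
    intro E hE F hF hne
    have hcases : ∀ X, X ∈ (Finset.univ.biUnion Q) ∪ Mfin.image fC →
        (∃ k, X ∈ Q k) ∨ (∃ e ∈ M.edgeSet, X = fC e) := by
      intro X hX
      rcases Finset.mem_union.mp hX with h | h
      · obtain ⟨k, _, hk⟩ := Finset.mem_biUnion.mp h
        exact Or.inl ⟨k, hk⟩
      · obtain ⟨e, he, rfl⟩ := Finset.mem_image.mp h
        exact Or.inr ⟨e, (hMmem e).mp he, rfl⟩
    have hQC : ∀ (k) (X), X ∈ Q k → ∀ e ∈ M.edgeSet, Disjoint X (fC e) := by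
      intro k X hX e heM
      by_cases hke : k ∈ e
      · exact hQd k e heM hke X hX
      · obtain ⟨heq, hne', _, _, hCij, _⟩ := hFdat e heM
        have hkI : k ≠ fI e := fun h => hke (by rw [heq, Sym2.mem_iff]; exact Or.inl h)
        have hkJ : k ≠ fJ e := fun h => hke (by rw [heq, Sym2.mem_iff]; exact Or.inr h)
        rw [Finset.disjoint_left]
        intro a haX haC
        have ha1 : a ∈ (Hc k).edgeSet := (hQp k).2.1 X hX haX
        rcases hCij haC with h | h
        · exact hkI (unique_part hedisj ha1 h)
        · exact hkJ (unique_part hedisj ha1 h)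
    rcases hcases E hE with ⟨k, hk⟩ | ⟨e, he, rfl⟩ <;>
      rcases hcases F hF with ⟨l, hl⟩ | ⟨f, hf, rfl⟩
    · by_cases hkl : k = l
      · subst hkl
        exact (hQp k).2.2 E hk F hl hne
      · exact disj_of_parts ((hQp k).2.1 E hk) ((hQp l).2.1 F hl) (hedisj k l hkl)
    · exact hQC k E hk f hf
    · exact (hQC l F hl e he).symm
    · -- two crossing cycles
      have hef : e ≠ f := fun h => hne (by rw [h])
      obtain ⟨heq, hneIJ, _, _, hCij, hentI, hentJ, _⟩ := hFdat e he
      obtain ⟨heq', hneIJ', _, _, hCij', _⟩ := hFdat f hf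
      rw [Finset.disjoint_left]
      intro a hae haf
      have hpart : ∀ k, k = fI e ∨ k = fJ e → k = fI f ∨ k = fJ f → False := by
        intro k h1 h2
        have hk1 : k ∈ e := by rw [heq, Sym2.mem_iff]; exact h1
        have hk2 : k ∈ f := by rw [heq', Sym2.mem_iff]; exact h2
        exact hef (hMuniq k e f he hf hk1 hk2)
      rcases hCij hae with h | h <;> rcases hCij' haf with h' | h'
      · exact hpart (fI e) (Or.inl rfl) (Or.inl (unique_part hedisj h h'))
      · exact hpart (fI e) (Or.inl rfl) (Or.inr (unique_part hedisj h h'))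
      · exact hpart (fJ e) (Or.inr rfl) (Or.inl (unique_part hedisj h h'))
      · exact hpart (fJ e) (Or.inr rfl) (Or.inr (unique_part hedisj h h'))
  · -- cardinality
    have hdisjQ : ∀ k ∈ Finset.univ (α := Fin c), ∀ l ∈ Finset.univ (α := Fin c), k ≠ l →
        Disjoint (Q k) (Q l) := by
      intro k _ l _ hkl
      rw [Finset.disjoint_left]
      intro X hXk hXl
      obtain ⟨a, ha⟩ := hLnon X ((hQp k).1 hXk)
      have h1 : a ∈ (Hc k).edgeSet := (hQp k).2.1 X hXk ha
      have h2 : a ∈ (Hc l).edgeSet := (hQp l).2.1 X hXl ha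
      exact hkl (unique_part hedisj h1 h2)
    have hdisjU : Disjoint (Finset.univ.biUnion Q) (Mfin.image fC) := by
      rw [Finset.disjoint_left]
      intro X hX hX'
      obtain ⟨k, _, hk⟩ := Finset.mem_biUnion.mp hX
      obtain ⟨e, he', rfl⟩ := Finset.mem_image.mp hX'
      have he := (hMmem e).mp he'
      obtain ⟨heq, hneIJ, _, _, _, hentI, hentJ, _⟩ := hFdat e he
      obtain ⟨g, hgC, hgI⟩ := hentI.1
      obtain ⟨g', hgC', hgJ⟩ := hentJ.1
      have h1 : k = fI e := unique_part hedisj ((hQp k).2.1 _ hk hgC) hgI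
      have h2 : k = fJ e := unique_part hedisj ((hQp k).2.1 _ hk hgC') hgJ
      exact hneIJ (h1 ▸ h2)
    have hinj : Set.InjOn fC Mfin := by
      intro e he' f hf' hCef
      have he := (hMmem e).mp he'
      have hf := (hMmem f).mp hf'
      obtain ⟨heq, hneIJ, _, _, _, hentI, _⟩ := hFdat e he
      obtain ⟨heq', hneIJ', _, _, hCij', _⟩ := hFdat f hf
      obtain ⟨g, hgC, hgI⟩ := hentI.1
      have hgC' : g ∈ fC f := hCef ▸ hgC
      have : fI e = fI f ∨ fI e = fJ f := by
        rcases hCij' hgC' with h | h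
        · exact Or.inl (unique_part hedisj hgI h)
        · exact Or.inr (unique_part hedisj hgI h)
      have hk1 : fI e ∈ e := by
        have h0 := Sym2.mem_mk_left (fI e) (fJ e)
        rwa [← heq] at h0
      have hk2 : fI e ∈ f := by rw [heq', Sym2.mem_iff]; exact this
      exact hMuniq (fI e) e f he hf hk1 hk2
    rw [Finset.card_union_of_disjoint hdisjU, Finset.card_biUnion hdisjQ,
      Finset.card_image_of_injOn hinj]
    congr 1
    · exact Finset.sum_congr rfl fun k _ => hQc k
    · exact (Set.ncard_eq_toFinset_card _ hMfin).symm

lemma upper_bound [Fintype V] (hst : s ≠ t) (hc : 1 ≤ c)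
    (hpar : ∀ i j, i ≠ j → (Hc i).verts ∩ (Hc j).verts = {s, t})
    (hedisj : ∀ i j, i ≠ j → (Hc i).edgeSet ∩ (Hc j).edgeSet = ∅)
    (hser : ∀ i, SeriesOrEdge (Hc i) s t)
    (ℒ : Finset (Finset (Sym2 V))) (hL : ∀ E ∈ ℒ, IsShortCycleEdges Γ E)
    (opt : Fin c → ℕ)
    (hopt : ∀ i, (∃ P, IsPacking ℒ (Hc i) P ∧ P.card = opt i) ∧
        ∀ P, IsPacking ℒ (Hc i) P → P.card ≤ opt i)
    (A : SimpleGraph (Fin c))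
    (hA : ∀ i j, A.Adj i j ↔ i ≠ j ∧ ∃ Cc ∈ ℒ,
        (Cc : Set (Sym2 V)) ⊆ (⨆ i, Hc i).edgeSet ∧ Enters (Hc i) Cc ∧ Enters (Hc j) Cc ∧
        (∃ P, IsPacking ℒ (Hc i) P ∧ P.card = opt i ∧ ∀ E ∈ P, Disjoint E Cc) ∧
        (∃ P, IsPacking ℒ (Hc j) P ∧ P.card = opt j ∧ ∀ E ∈ P, Disjoint E Cc))
    (M : A.Subgraph)
    (hMmax : ∀ M' : A.Subgraph, M'.IsMatching → M'.edgeSet.ncard ≤ M.edgeSet.ncard)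
    (P : Finset (Finset (Sym2 V))) (hP : IsPacking ℒ (⨆ i, Hc i) P) :
    P.card ≤ (∑ i, opt i) + M.edgeSet.ncard := by
  classical
  obtain ⟨hPL, hPsub, hPdisj⟩ := hP
  set Pin : Fin c → Finset (Finset (Sym2 V)) :=
    fun k => P.filter (fun E => (E : Set (Sym2 V)) ⊆ (Hc k).edgeSet) with hPindef
  set X : Finset (Finset (Sym2 V)) :=
    P.filter (fun E => ¬ ∃ k, (E : Set (Sym2 V)) ⊆ (Hc k).edgeSet) with hXdef
  have hPinPack : ∀ k, IsPacking ℒ (Hc k) (Pin k) := by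
    intro k
    refine ⟨(Finset.filter_subset _ _).trans hPL, ?_, ?_⟩
    · intro E hE
      exact (Finset.mem_filter.mp hE).2
    · intro E hE F hF hne
      exact hPdisj E (Finset.filter_subset _ _ hE) F (Finset.filter_subset _ _ hF) hne
  have hPinCard : ∀ k, (Pin k).card ≤ opt k := fun k => (hopt k).2 _ (hPinPack k)
  have hLnon : ∀ E ∈ ℒ, E.Nonempty := fun E hE => short_cycle_nonempty (hL E hE)
  -- partition of P
  have hPeq : P = (Finset.univ.biUnion Pin) ∪ X := by
    ext E
    simp only [Finset.mem_union, Finset.mem_biUnion, Finset.mem_filter, Finset.mem_univ,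
      true_and, hPindef, hXdef]
    constructor
    · intro hE
      by_cases h : ∃ k, (E : Set (Sym2 V)) ⊆ (Hc k).edgeSet
      · obtain ⟨k, hk⟩ := h
        exact Or.inl ⟨k, hE, hk⟩
      · exact Or.inr ⟨hE, h⟩
    · rintro (⟨k, hE, _⟩ | ⟨hE, _⟩) <;> exact hE
  have hdisjBX : Disjoint (Finset.univ.biUnion Pin) X := by
    rw [Finset.disjoint_left]
    intro E hE hEX
    obtain ⟨k, _, hk⟩ := Finset.mem_biUnion.mp hE
    exact (Finset.mem_filter.mp hEX).2 ⟨k, (Finset.mem_filter.mp hk).2⟩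
  have hdisjPin : ∀ k ∈ Finset.univ (α := Fin c), ∀ l ∈ Finset.univ (α := Fin c), k ≠ l →
      Disjoint (Pin k) (Pin l) := by
    intro k _ l _ hkl
    rw [Finset.disjoint_left]
    intro E hEk hEl
    obtain ⟨a, ha⟩ := hLnon E (hPL (Finset.filter_subset _ _ hEk))
    exact hkl (unique_part hedisj ((Finset.mem_filter.mp hEk).2 ha)
      ((Finset.mem_filter.mp hEl).2 ha))
  have hcardP : P.card = (∑ k, (Pin k).card) + X.card := by
    rw [hPeq, Finset.card_union_of_disjoint hdisjBX, Finset.card_biUnion hdisjPin]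
  -- crossing cycle data
  have i0 : Fin c := ⟨0, hc⟩
  have hXmem : ∀ E ∈ X, E ∈ P := fun E hE => Finset.filter_subset _ _ hE
  have hXdata : ∀ E : Finset (Sym2 V), ∃ i j : Fin c, E ∈ X →
      (i ≠ j ∧ Enters (Hc i) E ∧ Enters (Hc j) E ∧
        (E : Set (Sym2 V)) ⊆ (Hc i).edgeSet ∪ (Hc j).edgeSet) := by
    intro E
    by_cases hEX : E ∈ X
    · have hEP := hXmem E hEX
      have hsc := hL E (hPL hEP)
      have hsub := hPsub E hEP
      have hnotin := (Finset.mem_filter.mp hEX).2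
      rcases inside_or_enters hsc hsub with h | ⟨k, hk⟩
      · exact absurd h hnotin
      · obtain ⟨j', hj', F, G, hEFG, hFk, hGj, pF, pG⟩ := split hpar hsc hsub hk
        refine ⟨k, j', fun _ => ⟨fun h => hj' h.symm, hk, ?_, ?_⟩⟩
        · obtain ⟨g, hg⟩ := pathIn_nonempty pG
          obtain ⟨f, hf⟩ := pathIn_nonempty pF
          refine ⟨⟨g, hEFG ▸ Finset.mem_union_right _ hg, hGj hg⟩,
            ⟨f, hEFG ▸ Finset.mem_union_left _ hf, fun hcontra => ?_⟩⟩
          exact hj' (unique_part hedisj hcontra (hFk hf))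
        · intro f hf
          have : f ∈ F ∪ G := hEFG ▸ hf
          rcases Finset.mem_union.mp this with h | h
          · exact Or.inl (hFk h)
          · exact Or.inr (hGj h)
    · exact ⟨i0, i0, fun h => absurd h hEX⟩
  choose gI gJ hX using hXdata
  -- at most one crossing cycle enters each part
  have hXuniq : ∀ E ∈ X, ∀ E' ∈ X, ∀ k, Enters (Hc k) E → Enters (Hc k) E' → E = E' := by
    intro E hE E' hE' k hk hk'
    by_contra hne
    exact no_two_entering hst hpar hedisj hser (hL E (hPL (hXmem E hE)))
      (hL E' (hPL (hXmem E' hE'))) (hPsub E (hXmem E hE)) (hPsub E' (hXmem E' hE'))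
      hk hk' (hPdisj E (hXmem E hE) E' (hXmem E' hE') hne)
  have hEntOnly : ∀ E ∈ X, ∀ k, Enters (Hc k) E → k = gI E ∨ k = gJ E := by
    intro E hE k hk
    obtain ⟨e, heE, hek⟩ := hk.1
    rcases (hX E hE).2.2.2 heE with h | h
    · exact Or.inl (unique_part hedisj hek h)
    · exact Or.inr (unique_part hedisj hek h)
  -- D : crossing cycles with both ends saturated
  set D : Finset (Finset (Sym2 V)) :=
    X.filter (fun E => (Pin (gI E)).card = opt (gI E) ∧ (Pin (gJ E)).card = opt (gJ E))
    with hDdef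
  have hDX : D ⊆ X := Finset.filter_subset _ _
  -- disjointness of inside packings from crossing cycles
  have hPinDisj : ∀ (k) (E), E ∈ X → ∀ F ∈ Pin k, Disjoint F E := by
    intro k E hEX F hF
    have hFP : F ∈ P := Finset.filter_subset _ _ hF
    have hne : F ≠ E := by
      rintro rfl
      exact (Finset.mem_filter.mp hEX).2 ⟨k, (Finset.mem_filter.mp hF).2⟩
    exact hPdisj F hFP E (hXmem E hEX) hne
  -- the matching from D
  have hAdjD : ∀ E ∈ D, A.Adj (gI E) (gJ E) := by
    intro E hED
    have hEX := hDX hED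
    obtain ⟨hne, hentI, hentJ, _⟩ := hX E hEX
    obtain ⟨hcI, hcJ⟩ := (Finset.mem_filter.mp hED).2
    rw [hA]
    exact ⟨hne, E, hPL (hXmem E hEX), hPsub E (hXmem E hEX), hentI, hentJ,
      ⟨Pin (gI E), hPinPack _, hcI, hPinDisj (gI E) E hEX⟩,
      ⟨Pin (gJ E), hPinPack _, hcJ, hPinDisj (gJ E) E hEX⟩⟩
  set M' : A.Subgraph :=
    { verts := {k | ∃ E ∈ D, k = gI E ∨ k = gJ E}
      Adj := fun a b => ∃ E ∈ D, (a = gI E ∧ b = gJ E) ∨ (a = gJ E ∧ b = gI E)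
      adj_sub := by
        rintro a b ⟨E, hED, ⟨rfl, rfl⟩ | ⟨rfl, rfl⟩⟩
        · exact hAdjD E hED
        · exact (hAdjD E hED).symm
      edge_vert := by
        rintro a b ⟨E, hED, ⟨rfl, rfl⟩ | ⟨rfl, rfl⟩⟩
        · exact ⟨E, hED, Or.inl rfl⟩
        · exact ⟨E, hED, Or.inr rfl⟩
      symm := by
        constructor
        rintro a b ⟨E, hED, ⟨rfl, rfl⟩ | ⟨rfl, rfl⟩⟩
        · exact ⟨E, hED, Or.inr ⟨rfl, rfl⟩⟩
        · exact ⟨E, hED, Or.inl ⟨rfl, rfl⟩⟩ } with hM'def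
  have hM'Ent : ∀ E ∈ D, ∀ k, k = gI E ∨ k = gJ E → Enters (Hc k) E := by
    rintro E hED k (rfl | rfl)
    · exact (hX E (hDX hED)).2.1
    · exact (hX E (hDX hED)).2.2.1
  have hM'match : M'.IsMatching := by
    rintro v ⟨E, hED, hv⟩
    have hne := (hX E (hDX hED)).1
    refine ⟨if v = gI E then gJ E else gI E, ?_, ?_⟩
    · rcases hv with rfl | rfl
      · simp only [if_pos rfl]
        exact ⟨E, hED, Or.inl ⟨rfl, rfl⟩⟩
      · rw [if_neg (fun h => hne h.symm)]
        exact ⟨E, hED, Or.inr ⟨rfl, rfl⟩⟩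
    · rintro w ⟨E', hE'D, hw⟩
      have hEE' : E = E' := by
        apply hXuniq E (hDX hED) E' (hDX hE'D) v (hM'Ent E hED v hv)
        apply hM'Ent E' hE'D v
        rcases hw with ⟨rfl, _⟩ | ⟨rfl, _⟩
        · exact Or.inl rfl
        · exact Or.inr rfl
      subst hEE'
      rcases hw with ⟨rfl, rfl⟩ | ⟨rfl, rfl⟩
      · rw [if_pos rfl]
      · rw [if_neg (fun h => hne h.symm)]
  have hM'card : M'.edgeSet.ncard = D.card := by
    have hset : M'.edgeSet = ↑(D.image (fun E => s(gI E, gJ E))) := by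
      ext e
      induction e using Sym2.ind with
      | _ a b =>
      simp only [Subgraph.mem_edgeSet, hM'def, Finset.coe_image, Set.mem_image,
        Finset.mem_coe]
      constructor
      · rintro ⟨E, hED, ⟨rfl, rfl⟩ | ⟨rfl, rfl⟩⟩
        · exact ⟨E, hED, rfl⟩
        · exact ⟨E, hED, Sym2.eq_swap⟩
      · rintro ⟨E, hED, heq⟩
        rw [Sym2.eq_iff] at heq
        rcases heq with ⟨rfl, rfl⟩ | ⟨rfl, rfl⟩
        · exact ⟨E, hED, Or.inl ⟨rfl, rfl⟩⟩
        · exact ⟨E, hED, Or.inr ⟨rfl, rfl⟩⟩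
    rw [hset, Set.ncard_coe_finset]
    apply Finset.card_image_of_injOn
    intro E hED E' hE'D heq
    rw [Sym2.eq_iff] at heq
    have hgIE' : gI E = gI E' ∨ gI E = gJ E' := by tauto
    apply hXuniq E (hDX hED) E' (hDX hE'D) (gI E) (hM'Ent E hED _ (Or.inl rfl))
    exact hM'Ent E' hE'D _ hgIE'
  have hDcard : D.card ≤ M.edgeSet.ncard := hM'card ▸ hMmax M' hM'match
  -- deficient parts bound
  have hdefdata : ∀ E : Finset (Sym2 V), ∃ k : Fin c, E ∈ X \ D →
      (Enters (Hc k) E ∧ (Pin k).card < opt k) := by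
    intro E
    by_cases hE : E ∈ X \ D
    · obtain ⟨hEX, hED⟩ := Finset.mem_sdiff.mp hE
      rw [hDdef, Finset.mem_filter] at hED
      have : ¬((Pin (gI E)).card = opt (gI E) ∧ (Pin (gJ E)).card = opt (gJ E)) := by
        tauto
      rcases not_and_or.mp this with h | h
      · exact ⟨gI E, fun _ => ⟨(hX E hEX).2.1, lt_of_le_of_ne (hPinCard _) h⟩⟩
      · exact ⟨gJ E, fun _ => ⟨(hX E hEX).2.2.1, lt_of_le_of_ne (hPinCard _) h⟩⟩
    · exact ⟨i0, fun h => absurd h hE⟩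
  choose φ hφ using hdefdata
  have hφinj : Set.InjOn φ ↑(X \ D) := by
    intro E hE E' hE' heq
    have hE1 : E ∈ X \ D := Finset.mem_coe.mp hE
    have hE'1 : E' ∈ X \ D := Finset.mem_coe.mp hE'
    apply hXuniq E (Finset.mem_sdiff.mp hE1).1 E' (Finset.mem_sdiff.mp hE'1).1 (φ E)
      (hφ E hE1).1
    exact heq ▸ (hφ E' hE'1).1
  have hXDbound : (X \ D).card ≤ ∑ k, (opt k - (Pin k).card) := by
    rw [← Finset.card_image_of_injOn hφinj]
    calc ((X \ D).image φ).card = ∑ k ∈ (X \ D).image φ, 1 := by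
          rw [Finset.card_eq_sum_ones]
      _ ≤ ∑ k ∈ (X \ D).image φ, (opt k - (Pin k).card) := by
          apply Finset.sum_le_sum
          intro k hk
          obtain ⟨E, hE, rfl⟩ := Finset.mem_image.mp hk
          have := (hφ E hE).2
          omega
      _ ≤ ∑ k, (opt k - (Pin k).card) := by
          apply Finset.sum_le_sum_of_subset
          exact Finset.subset_univ _
  have hXcard : X.card = D.card + (X \ D).card := by
    rw [Finset.card_sdiff_of_subset hDX]
    have := Finset.card_le_card hDX
    omega
  have hsumsplit : (∑ k, (Pin k).card) + (∑ k, (opt k - (Pin k).card)) = ∑ k, opt k := by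
    rw [← Finset.sum_add_distrib]
    apply Finset.sum_congr rfl
    intro k _
    have := hPinCard k
    omega
  omega

/-- Let `Gx = Hc 0 ∥ ⋯ ∥ Hc (c-1)` be a parallel composition (at a
`∥`-node `x` of a layered decomposition tree, so each child is a single edge or a series
composition), let `ℒ` be a list of cycles of length at most `4`, `opt i` the optimum
packing size inside `Hc i`, and `A` the auxiliary graph on `Fin c` in which `i j` is an
edge iff some listed cycle inside `Gx` enters both `Hc i` and `Hc j` and is compatible
with optimal sub-solutions of both.  If `M` is a maximum matching of `A`, then the
optimum packing size inside `Gx` equals `(∑ i, opt i) + |M|`. -/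
theorem parallel_node_packing_eq_sum_opt_add_matching
    [Fintype V] (Γ : SimpleGraph V) (s t : V) (hst : s ≠ t)
    (c : ℕ) (hc : 1 ≤ c) (Hc : Fin c → Γ.Subgraph)
    (hterm : ∀ i, s ∈ (Hc i).verts ∧ t ∈ (Hc i).verts)
    (hpar : ∀ i j, i ≠ j → (Hc i).verts ∩ (Hc j).verts = {s, t})
    (hedisj : ∀ i j, i ≠ j → (Hc i).edgeSet ∩ (Hc j).edgeSet = ∅)
    (hser : ∀ i, SeriesOrEdge (Hc i) s t)
    (Gx : Γ.Subgraph) (hGx : Gx = ⨆ i, Hc i)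
    (hclosed : ∀ u ∈ Gx.verts, u ≠ s → u ≠ t → ∀ w : V, Γ.Adj u w →
        s(u, w) ∈ Gx.edgeSet)
    (ℒ : Finset (Finset (Sym2 V))) (hL : ∀ E ∈ ℒ, IsShortCycleEdges Γ E)
    (opt : Fin c → ℕ)
    (hopt : ∀ i, (∃ P, IsPacking ℒ (Hc i) P ∧ P.card = opt i) ∧
        ∀ P, IsPacking ℒ (Hc i) P → P.card ≤ opt i)
    (A : SimpleGraph (Fin c))
    (hA : ∀ i j, A.Adj i j ↔ i ≠ j ∧ ∃ Cc ∈ ℒ,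
        (Cc : Set (Sym2 V)) ⊆ Gx.edgeSet ∧ Enters (Hc i) Cc ∧ Enters (Hc j) Cc ∧
        (∃ P, IsPacking ℒ (Hc i) P ∧ P.card = opt i ∧ ∀ E ∈ P, Disjoint E Cc) ∧
        (∃ P, IsPacking ℒ (Hc j) P ∧ P.card = opt j ∧ ∀ E ∈ P, Disjoint E Cc))
    (M : A.Subgraph) (hM : M.IsMatching)
    (hMmax : ∀ M' : A.Subgraph, M'.IsMatching → M'.edgeSet.ncard ≤ M.edgeSet.ncard) :
    (∃ P, IsPacking ℒ Gx P ∧ P.card = (∑ i, opt i) + M.edgeSet.ncard) ∧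
    (∀ P, IsPacking ℒ Gx P → P.card ≤ (∑ i, opt i) + M.edgeSet.ncard) := by
  subst hGx
  exact ⟨lower_bound hst hc hpar hedisj ℒ hL opt hopt A hA M hM,
    fun P hP => upper_bound hst hc hpar hedisj hser ℒ hL opt hopt A hA M hMmax P hP⟩
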